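/- Let X be a random closed subset of ℝ (a 𝒞-valued random variable with the Fell–Matheron Borel σ-algebra). Then the set of t ∈ ℝ at which P(g_{t−}(X) = g_t(X)) = 1 fails, i.e. {t : P(g_{t−}(X) ≠ g_t(X)) > 0}, is at most countable. -/

import Mathlib

open scoped Real
open MeasureTheory

/-- The space of all closed subsets of `ℝ`. -/
def ClosedSubsets : Type := {S : Set ℝ // IsClosed S}

/-- The Fell–Matheron distance on closed subsets of `ℝ`. -/
noncomputable def FMdist (C C' : ClosedSubsets) : ℝ :=
  Metric.hausdorffDist
    (Real.arctan '' C.1 ∪ {-(π / 2), π / 2})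
    (Real.arctan '' C'.1 ∪ {-(π / 2), π / 2})

/-- The Fell–Matheron topology on closed subsets of `ℝ`. -/
noncomputable def fellTop : TopologicalSpace ClosedSubsets :=
  TopologicalSpace.generateFrom
    {s : Set ClosedSubsets | ∃ C ε, 0 < ε ∧ s = {D | FMdist C D < ε}}

/-- `gSet t C = sup {x ∈ C : x ≤ t}`, with values in `ℝ̄` and `sup ∅ = −∞`. -/
noncomputable def gSet (t : ℝ) (C : Set ℝ) : EReal :=
  sSup {x : EReal | ∃ r : ℝ, r ∈ C ∧ r ≤ t ∧ x = (r : EReal)}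

/-- The left limit `g_{t−}(C) = sup_{s < t} g_s(C)`. -/
noncomputable def gSetLeft (t : ℝ) (C : Set ℝ) : EReal :=
  sSup {x : EReal | ∃ s : ℝ, s < t ∧ x = gSet s C}

namespace CBT

/-- The compactified image of a closed set. -/
noncomputable def FMset (C : ClosedSubsets) : Set ℝ :=
  Real.arctan '' C.1 ∪ {-(π / 2), π / 2}

lemma FMdist_eq (C D : ClosedSubsets) : FMdist C D = Metric.hausdorffDist (FMset C) (FMset D) :=
  rfl

lemma FMset_nonempty (C : ClosedSubsets) : (FMset C).Nonempty :=
  ⟨π / 2, Or.inr (by simp)⟩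

lemma FMset_subset (C : ClosedSubsets) : FMset C ⊆ Set.Icc (-(π / 2)) (π / 2) := by
  rintro x (⟨r, _, rfl⟩ | hx)
  · exact ⟨(Real.neg_pi_div_two_lt_arctan r).le, (Real.arctan_lt_pi_div_two r).le⟩
  · simp only [Set.mem_insert_iff, Set.mem_singleton_iff] at hx
    rcases hx with rfl | rfl
    · exact ⟨le_refl _, by linarith [Real.pi_pos]⟩
    · exact ⟨by linarith [Real.pi_pos], le_refl _⟩

lemma FMset_bounded (C : ClosedSubsets) : Bornology.IsBounded (FMset C) :=
  (Metric.isBounded_Icc _ _).subset (FMset_subset C)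

lemma FMedist_ne_top (C D : ClosedSubsets) : EMetric.hausdorffEdist (FMset C) (FMset D) ≠ ⊤ :=
  Metric.hausdorffEdist_ne_top_of_nonempty_of_bounded (FMset_nonempty C) (FMset_nonempty D)
    (FMset_bounded C) (FMset_bounded D)

/-- Key separation: if a closed set misses `[a,b]`, then all Fell-close sets miss it too. -/
lemma exists_eps (a b : ℝ) (hab : a ≤ b) (C : ClosedSubsets) (h : C.1 ∩ Set.Icc a b = ∅) :
    ∃ ε > 0, ∀ D : ClosedSubsets, FMdist C D < ε → D.1 ∩ Set.Icc a b = ∅ := by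
  -- find δ > 0 with C ∩ [a - δ, b + δ] = ∅
  have hsub : Set.Icc a b ⊆ C.1ᶜ := by
    intro x hx hxC
    exact absurd h (Set.nonempty_iff_ne_empty.1 ⟨x, hxC, hx⟩)
  obtain ⟨δ, hδ, hth⟩ := (isCompact_Icc (a := a) (b := b)).exists_thickening_subset_open
    C.2.isOpen_compl hsub
  have hδ2 : (0:ℝ) < δ / 2 := by linarith
  have hCδ : ∀ c ∈ C.1, c < a - δ / 2 ∨ b + δ / 2 < c := by
    intro c hc
    by_contra hcon
    push_neg at hcon
    obtain ⟨h1, h2⟩ := hcon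
    have : c ∈ Metric.thickening δ (Set.Icc a b) := by
      rw [Metric.mem_thickening_iff]
      rcases le_total c a with hca | hac
      · exact ⟨a, ⟨le_refl a, hab⟩, by rw [Real.dist_eq]; rw [abs_of_nonpos (by linarith)]; linarith⟩
      · rcases le_total c b with hcb | hbc
        · exact ⟨c, ⟨hac, hcb⟩, by simp [hδ]⟩
        · exact ⟨b, ⟨hab, le_refl b⟩, by rw [Real.dist_eq]; rw [abs_of_nonneg (by linarith)]; linarith⟩
    exact hth this hc
  set ε := min (min (Real.arctan a - Real.arctan (a - δ / 2))
      (Real.arctan (b + δ / 2) - Real.arctan b))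
      (min (π / 2 - Real.arctan b) (Real.arctan a + π / 2)) with hε
  have hεpos : 0 < ε := by
    refine lt_min (lt_min ?_ ?_) (lt_min ?_ ?_)
    · have := Real.arctan_strictMono (show a - δ / 2 < a by linarith); linarith
    · have := Real.arctan_strictMono (show b < b + δ / 2 by linarith); linarith
    · have := Real.arctan_lt_pi_div_two b; linarith
    · have := Real.neg_pi_div_two_lt_arctan a; linarith
  refine ⟨ε, hεpos, fun D hD => ?_⟩
  rw [Set.eq_empty_iff_forall_notMem]
  rintro x ⟨hxD, hxa, hxb⟩
  have hxmem : Real.arctan x ∈ FMset D := Or.inl ⟨x, hxD, rfl⟩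
  rw [FMdist_eq] at hD
  obtain ⟨y, hyC, hdy⟩ :=
    Metric.exists_dist_lt_of_hausdorffDist_lt' hxmem hD (FMedist_ne_top C D)
  rw [dist_comm] at hdy
  have harctx1 : Real.arctan a ≤ Real.arctan x := Real.arctan_strictMono.monotone hxa
  have harctx2 : Real.arctan x ≤ Real.arctan b := Real.arctan_strictMono.monotone hxb
  rcases hyC with ⟨c, hcC, rfl⟩ | hy
  · rcases hCδ c hcC with hc | hc
    · have h1 : Real.arctan c < Real.arctan (a - δ / 2) := Real.arctan_strictMono hc
      have h2 : ε ≤ Real.arctan a - Real.arctan (a - δ / 2) := (min_le_left _ _).trans (min_le_left _ _)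
      rw [Real.dist_eq] at hdy
      have : Real.arctan x - Real.arctan c ≤ |Real.arctan x - Real.arctan c| := le_abs_self _
      linarith
    · have h1 : Real.arctan (b + δ / 2) < Real.arctan c := Real.arctan_strictMono hc
      have h2 : ε ≤ Real.arctan (b + δ / 2) - Real.arctan b := (min_le_left _ _).trans (min_le_right _ _)
      rw [Real.dist_eq] at hdy
      have : Real.arctan c - Real.arctan x ≤ |Real.arctan x - Real.arctan c| := by
        rw [abs_sub_comm]; exact le_abs_self _
      linarith
  · rcases hy with h | h
    · have h2 : ε ≤ Real.arctan a + π / 2 := (min_le_right _ _).trans (min_le_right _ _)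
      rw [h, Real.dist_eq] at hdy
      have : Real.arctan x + π / 2 ≤ |Real.arctan x - -(π / 2)| := by
        rw [abs_of_nonneg (by nlinarith [Real.neg_pi_div_two_lt_arctan x])]; ring_nf; rfl
      linarith
    · have h2 : ε ≤ π / 2 - Real.arctan b := (min_le_right _ _).trans (min_le_left _ _)
      rw [h, Real.dist_eq] at hdy
      have : π / 2 - Real.arctan x ≤ |Real.arctan x - π / 2| := by
        rw [abs_of_nonpos (by nlinarith [Real.arctan_lt_pi_div_two x])]; ring_nf; rfl
      linarith

/-- The hitting set `{C | C ∩ [a,b] ≠ ∅}`. -/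
def hit (a b : ℝ) : Set ClosedSubsets := {C | (C.1 ∩ Set.Icc a b).Nonempty}

lemma measurableSet_hit (a b : ℝ) : MeasurableSet[@borel ClosedSubsets fellTop] (hit a b) := by
  letI : TopologicalSpace ClosedSubsets := fellTop
  have hopen : IsOpen (hit a b)ᶜ := by
    rcases le_or_gt a b with hab | hab
    · rw [isOpen_iff_forall_mem_open]
      intro C hC
      obtain ⟨ε, hεpos, hball⟩ := exists_eps a b hab C (Set.not_nonempty_iff_eq_empty.1 hC)
      refine ⟨{D | FMdist C D < ε}, fun D hD => Set.not_nonempty_iff_eq_empty.2 (hball D hD), ?_, ?_⟩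
      · exact TopologicalSpace.GenerateOpen.basic _ ⟨C, ε, hεpos, rfl⟩
      · show FMdist C C < ε
        rw [FMdist_eq, Metric.hausdorffDist_self_zero]; exact hεpos
    · have : (hit a b)ᶜ = Set.univ := by
        ext C; simp [hit, Set.Icc_eq_empty_of_lt hab]
      rw [this]; exact isOpen_univ
  have h1 : MeasurableSet[@borel ClosedSubsets fellTop] (hit a b)ᶜ :=
    MeasurableSpace.measurableSet_generateFrom hopen
  simpa using h1.compl

lemma mem_closed_iff (C : ClosedSubsets) (t : ℝ) :
    t ∈ C.1 ↔ ∀ n : ℕ, C ∈ hit (t - 1 / (n + 1)) (t + 1 / (n + 1)) := by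
  constructor
  · intro h n
    have hpos : (0:ℝ) < 1 / ((n:ℝ) + 1) := by positivity
    exact ⟨t, h, by constructor <;> linarith⟩
  · intro h
    choose x hx using h
    have hxC : ∀ n : ℕ, x n ∈ C.1 := fun n => (hx n).1
    have hxm : ∀ n : ℕ, x n ∈ Set.Icc (t - 1 / ((n:ℝ) + 1)) (t + 1 / ((n:ℝ) + 1)) :=
      fun n => (hx n).2
    have htend : Filter.Tendsto x Filter.atTop (nhds t) := by
      have h0 : Filter.Tendsto (fun n : ℕ => 1 / ((n:ℝ) + 1)) Filter.atTop (nhds 0) :=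
        tendsto_one_div_add_atTop_nhds_zero_nat
      have h1 : Filter.Tendsto (fun n : ℕ => t - 1 / ((n:ℝ) + 1)) Filter.atTop (nhds t) := by
        simpa using tendsto_const_nhds.sub h0
      have h2 : Filter.Tendsto (fun n : ℕ => t + 1 / ((n:ℝ) + 1)) Filter.atTop (nhds t) := by
        simpa using tendsto_const_nhds.add h0
      exact tendsto_of_tendsto_of_tendsto_of_le_of_le h1 h2
        (fun n => (hxm n).1) (fun n => (hxm n).2)
    exact C.2.mem_of_tendsto htend (Filter.Eventually.of_forall hxC)

lemma ico_nonempty_iff (C : ClosedSubsets) (u t : ℝ) :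
    (C.1 ∩ Set.Ico u t).Nonempty ↔ ∃ n : ℕ, C ∈ hit u (t - 1 / (n + 1)) := by
  constructor
  · rintro ⟨r, hrC, hru, hrt⟩
    obtain ⟨n, hn⟩ := exists_nat_one_div_lt (show (0:ℝ) < t - r by linarith)
    exact ⟨n, r, hrC, hru, by linarith⟩
  · rintro ⟨n, r, hrC, hru, hrt⟩
    have hpos : (0:ℝ) < 1 / ((n:ℝ) + 1) := by positivity
    exact ⟨r, hrC, hru, by linarith⟩

/-- The event that `t ∈ C` and `C` contains no point in `[u, t)`. -/
def Bset (u t : ℝ) : Set ClosedSubsets := {C | t ∈ C.1 ∧ C.1 ∩ Set.Ico u t = ∅}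

lemma measurableSet_Bset (u t : ℝ) : MeasurableSet[@borel ClosedSubsets fellTop] (Bset u t) := by
  have heq : Bset u t = (⋂ n : ℕ, hit (t - 1 / (n + 1)) (t + 1 / (n + 1))) ∩
      (⋃ n : ℕ, hit u (t - 1 / (n + 1)))ᶜ := by
    ext C
    simp only [Bset, Set.mem_setOf_eq, Set.mem_inter_iff, Set.mem_iInter, Set.mem_compl_iff,
      Set.mem_iUnion, ← ico_nonempty_iff, ← mem_closed_iff, Set.not_nonempty_iff_eq_empty]
  rw [heq]
  exact (MeasurableSet.iInter fun n => measurableSet_hit _ _).inter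
    (MeasurableSet.iUnion fun n => measurableSet_hit _ _).compl

lemma exists_rat (t : ℝ) (C : ClosedSubsets) (h : gSetLeft t C.1 ≠ gSet t C.1) :
    ∃ u : ℚ, (u:ℝ) < t ∧ C ∈ Bset u t := by
  have hmono : ∀ s ≤ t, gSet s C.1 ≤ gSet t C.1 := by
    intro s hs
    apply sSup_le_sSup
    rintro x ⟨r, hr, hrs, rfl⟩
    exact ⟨r, hr, hrs.trans hs, rfl⟩
  have hle : gSetLeft t C.1 ≤ gSet t C.1 := by
    apply sSup_le
    rintro x ⟨s, hs, rfl⟩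
    exact hmono s hs.le
  have hlt : gSetLeft t C.1 < gSet t C.1 := hle.lt_of_ne h
  obtain ⟨u, hu1, hu2⟩ := EReal.exists_rat_btwn_of_lt hlt
  obtain ⟨x, ⟨r, hrC, hrt, rfl⟩, hxr⟩ := lt_sSup_iff.1 hu2
  have hur : (u:ℝ) < r := by exact_mod_cast hxr
  have hempty : C.1 ∩ Set.Ico ((u:ℚ):ℝ) t = ∅ := by
    rw [Set.eq_empty_iff_forall_notMem]
    rintro c ⟨hcC, hcu, hct⟩
    have h1 : (c:EReal) ≤ gSet c C.1 := le_sSup ⟨c, hcC, le_refl c, rfl⟩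
    have h2 : gSet c C.1 ≤ gSetLeft t C.1 := le_sSup ⟨c, hct, rfl⟩
    have h3 : (c:EReal) < ((u:ℝ):EReal) := lt_of_le_of_lt (h1.trans h2) hu1
    have : c < (u:ℝ) := by exact_mod_cast h3
    linarith
  have hrt' : r = t := by
    by_contra hne
    rw [Set.eq_empty_iff_forall_notMem] at hempty
    exact hempty r ⟨hrC, hur.le, lt_of_le_of_ne hrt hne⟩
  exact ⟨u, hrt' ▸ hur, hrt' ▸ hrC, hempty⟩

end CBT

theorem countable_bad_times {Ω : Type*} [MeasurableSpace Ω] (μ : Measure Ω)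
    [IsProbabilityMeasure μ] (X : Ω → ClosedSubsets)
    (hX : @Measurable Ω ClosedSubsets _ (@borel ClosedSubsets fellTop) X) :
    Set.Countable {t : ℝ | μ {ω | gSetLeft t (X ω).1 ≠ gSet t (X ω).1} ≠ 0} := by
  have hsub : {t : ℝ | μ {ω | gSetLeft t (X ω).1 ≠ gSet t (X ω).1} ≠ 0} ⊆
      ⋃ u : ℚ, {t : ℝ | (u:ℝ) < t ∧ μ (X ⁻¹' CBT.Bset u t) ≠ 0} := by
    intro t ht
    simp only [Set.mem_setOf_eq] at ht
    have hsub2 : {ω | gSetLeft t (X ω).1 ≠ gSet t (X ω).1} ⊆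
        ⋃ u : ℚ, {ω | (u:ℝ) < t ∧ X ω ∈ CBT.Bset u t} := by
      intro ω hω
      obtain ⟨u, hu, hB⟩ := CBT.exists_rat t (X ω) hω
      exact Set.mem_iUnion.2 ⟨u, hu, hB⟩
    have hne : μ (⋃ u : ℚ, {ω | (u:ℝ) < t ∧ X ω ∈ CBT.Bset u t}) ≠ 0 :=
      fun h0 => ht (measure_mono_null hsub2 h0)
    rw [Ne, measure_iUnion_null_iff] at hne
    push_neg at hne
    obtain ⟨u, hu⟩ := hne
    have hut : (u:ℝ) < t := by
      by_contra hns
      apply hu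
      have : {ω | (u:ℝ) < t ∧ X ω ∈ CBT.Bset u t} = ∅ := by
        ext ω; simp only [Set.mem_setOf_eq, Set.mem_empty_iff_false, iff_false]
        exact fun hc => hns hc.1
      rw [this]; exact measure_empty
    refine Set.mem_iUnion.2 ⟨u, hut, fun h0 => hu ?_⟩
    exact measure_mono_null (fun ω h => h.2) h0
  refine Set.Countable.mono hsub (Set.countable_iUnion fun u => ?_)
  set s : ℝ → Set Ω := fun t => if (u:ℝ) < t then X ⁻¹' CBT.Bset u t else ∅ with hs
  have hT : {t : ℝ | (u:ℝ) < t ∧ μ (X ⁻¹' CBT.Bset u t) ≠ 0} ⊆ {t | 0 < μ (s t)} := by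
    rintro t ⟨h1, h2⟩
    simp only [Set.mem_setOf_eq, hs, if_pos h1]
    exact lt_of_le_of_ne zero_le (Ne.symm h2)
  refine Set.Countable.mono hT ?_
  have hdisj : ∀ t t' : ℝ, t < t' → Disjoint (s t) (s t') := by
    intro t t' hlt
    rw [Set.disjoint_left]
    intro ω h1 h2
    simp only [hs] at h1 h2
    by_cases hc1 : (u:ℝ) < t
    · by_cases hc2 : (u:ℝ) < t'
      · rw [if_pos hc1] at h1
        rw [if_pos hc2] at h2
        have hmem : t ∈ (X ω).1 := h1.1
        have hemp := h2.2
        rw [Set.eq_empty_iff_forall_notMem] at hemp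
        exact hemp t ⟨hmem, hc1.le, hlt⟩
      · rw [if_neg hc2] at h2; exact h2
    · rw [if_neg hc1] at h1; exact h1
  apply MeasureTheory.Measure.countable_meas_pos_of_disjoint_iUnion (μ := μ)
  · intro t
    by_cases hc : (u:ℝ) < t
    · simp only [hs, if_pos hc]
      exact hX (CBT.measurableSet_Bset u t)
    · simp only [hs, if_neg hc]
      exact MeasurableSet.empty
  · intro t t' hne
    rcases hne.lt_or_gt with h | h
    · exact hdisj _ _ h
    · exact (hdisj _ _ h).symm
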